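/- Let (X,r) be a left non-degenerate solution and ϕ: A(X,r) → 𝒢(X,r) the map with ϕ(a)ϕ(b) = ϕ(a·ϕ(a)(b)) coming from the bijective 1-cocycle. Define τ: X → X by τ(x) = λ_x^{-1}(x). Then for each x ∈ X and n ≥ 1, in the monoid M(X,r) ⊆ A ⋊ 𝒢 one has (x^n, ϕ(x^n)) = (x, ϕ(x))(τ(x), ϕ(τ(x)))⋯(τ^{n-1}(x), ϕ(τ^{n-1}(x))). -/
import Mathlib


/-- `σ_z(x) = λ_z(ρ_{λ_x⁻¹(z)}(x))`. -/
def sigmaMap {X : Type*} (lam : X → Equiv.Perm X) (rho : X → X → X) (z x : X) : X :=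
  lam z (rho ((lam x).symm z) x)

/-- Defining relations of the derived structure monoid `A(X,r) = ⟨X | xz = z·σ_z(x)⟩`. -/
def derivedRel {X : Type*} (lam : X → Equiv.Perm X) (rho : X → X → X) :
    FreeMonoid X → FreeMonoid X → Prop := fun a b =>
  ∃ x z : X, a = FreeMonoid.of x * FreeMonoid.of z ∧
    b = FreeMonoid.of z * FreeMonoid.of (sigmaMap lam rho z x)

/-- The derived structure monoid `A(X,r)`. -/
abbrev DerivedMonoid {X : Type*} (lam : X → Equiv.Perm X) (rho : X → X → X) :=
  (conGen (derivedRel lam rho)).Quotient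

/-- The canonical image of a generator `x ∈ X` in `A(X,r)`. -/
def ofA {X : Type*} (lam : X → Equiv.Perm X) (rho : X → X → X) (x : X) :
    DerivedMonoid lam rho := (conGen (derivedRel lam rho)).mk' (FreeMonoid.of x)

/-- The semidirect product `A ⋊ Aut(A)` of a monoid `A` with its automorphism group,
with multiplication `(a, g)(b, h) = (a · g(b), g h)`. -/
structure MonoidSDP (A : Type*) [Monoid A] where
  fst : A
  snd : MulAut A

namespace MonoidSDP

variable {A : Type*} [Monoid A]

instance : Monoid (MonoidSDP A) where
  mul p q := ⟨p.fst * p.snd q.fst, p.snd * q.snd⟩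
  one := ⟨1, 1⟩
  mul_assoc := by
    rintro ⟨a, g⟩ ⟨b, h⟩ ⟨c, k⟩
    refine congrArg₂ MonoidSDP.mk ?_ (mul_assoc g h k)
    show (a * g b) * (g * h) c = a * g (b * h c)
    simp [MulAut.mul_apply, map_mul, mul_assoc]
  one_mul := by
    rintro ⟨a, g⟩
    refine congrArg₂ MonoidSDP.mk ?_ (one_mul g)
    show 1 * (1 : MulAut A) a = a
    simp
  mul_one := by
    rintro ⟨a, g⟩
    refine congrArg₂ MonoidSDP.mk ?_ (mul_one g)
    show a * g 1 = a
    simp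

theorem mul_def (p q : MonoidSDP A) :
    p * q = ⟨p.fst * p.snd q.fst, p.snd * q.snd⟩ := rfl

theorem one_def : (1 : MonoidSDP A) = ⟨1, 1⟩ := rfl

end MonoidSDP

theorem stmt17 {X : Type*} (lam : X → Equiv.Perm X) (rho : X → X → X)
    (hYB1 : ∀ x y z : X, lam x (lam y z) = lam (lam x y) (lam (rho y x) z))
    (hYB2 : ∀ x y z : X,
      lam (rho (lam y z) x) (rho z y) = rho (lam (rho y x) z) (lam x y))
    (hYB3 : ∀ x y z : X, rho z (rho y x) = rho (rho z y) (rho (lam y z) x))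
    -- `ϕ : A → 𝒢` coming from the bijective 1-cocycle, with `ϕ(x) = λ_x` on generators
    (ϕ : DerivedMonoid lam rho → MulAut (DerivedMonoid lam rho))
    (hϕ1 : ϕ 1 = 1)
    (hϕcoc : ∀ a b : DerivedMonoid lam rho, ϕ a * ϕ b = ϕ (a * ϕ a b))
    (hϕgen : ∀ x y : X, ϕ (ofA lam rho x) (ofA lam rho y) = ofA lam rho (lam x y))
    -- `τ(x) = λ_x⁻¹(x)`
    (τ : X → X) (hτ : ∀ x : X, τ x = (lam x).symm x) :
    -- `(x^n, ϕ(x^n)) = (x, ϕ(x))·(τ(x), ϕ(τ(x))) ⋯ (τ^{n-1}(x), ϕ(τ^{n-1}(x)))` in `A ⋊ 𝒢`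
    ∀ (x : X) (n : ℕ), 1 ≤ n →
      MonoidSDP.mk (ofA lam rho x ^ n) (ϕ (ofA lam rho x ^ n)) =
        ((List.range n).map fun i =>
          MonoidSDP.mk (ofA lam rho (τ^[i] x)) (ϕ (ofA lam rho (τ^[i] x)))).prod := by
  intro x n hn
  clear hn
  clear hYB1 hYB2 hYB3
  have key : ∀ m : ℕ, ϕ (ofA lam rho x ^ m) (ofA lam rho (τ^[m] x)) = ofA lam rho x := by
    intro m
    induction m with
    | zero => simp [hϕ1]
    | succ m ih =>
      have hpow : ofA lam rho x ^ (m + 1) =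
          ofA lam rho x ^ m * ϕ (ofA lam rho x ^ m) (ofA lam rho (τ^[m] x)) := by
        rw [ih, pow_succ]
      have hphi : ϕ (ofA lam rho x ^ (m + 1)) =
          ϕ (ofA lam rho x ^ m) * ϕ (ofA lam rho (τ^[m] x)) :=
        ((hϕcoc _ _).trans (congrArg ϕ hpow.symm)).symm
      have hiter : τ^[m + 1] x = τ (τ^[m] x) := Function.iterate_succ_apply' τ m x
      rw [hphi, hiter, MulAut.mul_apply, hϕgen, hτ (τ^[m] x), Equiv.apply_symm_apply, ih]
  induction n with
  | zero => simp [MonoidSDP.one_def, hϕ1]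
  | succ n ih =>
    rw [List.range_succ, List.map_append, List.prod_append, ← ih]
    simp only [List.map_cons, List.map_nil, List.prod_cons, List.prod_nil, mul_one]
    have h2 : ϕ (ofA lam rho x ^ (n + 1)) =
        ϕ (ofA lam rho x ^ n) * ϕ (ofA lam rho (τ^[n] x)) :=
      ((hϕcoc _ _).trans (congrArg ϕ (by rw [key n, ← pow_succ]))).symm
    rw [MonoidSDP.mul_def, key n, ← pow_succ, h2]
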